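/- Fix n ≥ 1, a vector c ∈ ℝⁿ with c ≥ 0 componentwise and ‖c‖ = 1, and constants B_max > 0, θ* > 0, C* < ∞, K < ∞, ν ∈ (0, π/2], ε₀ > 0. For each ε ∈ (0, ε₀), let q_ε be an ℝⁿ-valued random vector with q_ε ≥ 0 coordinatewise a.s., s_ε an ℝⁿ-valued random vector, and B_ε a real random variable, defined on the same probability space, such that: 0 ≤ ⟨c, s_ε⟩ ≤ B_ε ≤ B_max almost surely; E[e^{θ* ‖(q_ε)_⊥‖}] ≤ C*, where (q_ε)_⊥ := q_ε − ⟨c, q_ε⟩ c; P(B_ε ≠ ⟨c, s_ε⟩) ≤ K ε; and almost surely on the event {B_ε ≠ ⟨c, s_ε⟩} one has ⟨c, q_ε⟩ ≤ cot(ν) · ‖(q_ε)_⊥‖. Then for every θ ∈ ℝ, E[(e^{θ ε ⟨c, q_ε⟩} − 1)(e^{θ ε (B_ε − ⟨c, s_ε⟩)} − 1)] / ε² → 0 as ε → 0⁺. -/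

import Mathlib

open MeasureTheory ProbabilityTheory Filter Topology Real


set_option maxHeartbeats 2000000

lemma aux_abs_exp_sub_one_le (a : ℝ) : |Real.exp a - 1| ≤ Real.exp |a| - 1 := by
  rcases le_or_gt 0 a with h | h
  · rw [abs_of_nonneg h, abs_of_nonneg (by linarith [Real.one_le_exp h])]
  · rw [abs_of_neg h, abs_of_nonpos (by linarith [Real.exp_lt_one_iff.mpr h] : Real.exp a - 1 ≤ 0)]
    have e1 : Real.exp (a/2) * Real.exp (a/2) = Real.exp a := by
      rw [← Real.exp_add]; ring_nf
    have e2 : Real.exp (-(a/2)) * Real.exp (-(a/2)) = Real.exp (-a) := by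
      rw [← Real.exp_add]; ring_nf
    have e3 : Real.exp (a/2) * Real.exp (-(a/2)) = 1 := by
      rw [← Real.exp_add]; ring_nf; exact Real.exp_zero
    nlinarith [sq_nonneg (Real.exp (a/2) - Real.exp (-(a/2)))]

lemma aux_exp_sub_one_le (x : ℝ) : Real.exp x - 1 ≤ x * Real.exp x := by
  have h1 : Real.exp (-x) * Real.exp x = 1 := by rw [← Real.exp_add]; simp
  nlinarith [Real.add_one_le_exp (-x), Real.exp_pos x]

lemma aux_le_exp (u : ℝ) : u ≤ Real.exp u := by linarith [Real.add_one_le_exp u]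

lemma aux_split (s Ex : ℝ) (hs : 0 < s) (hE : 0 < Ex) : Ex ≤ s⁻¹ + s * (Ex * Ex) := by
  have h3 : s * Ex ≤ s * (s⁻¹ + s * (Ex * Ex)) := by
    rw [mul_add, mul_inv_cancel₀ hs.ne']
    nlinarith [sq_nonneg (s * Ex - 1)]
  exact le_of_mul_le_mul_left h3 hs

/-- MaxWeight alignment estimate for the generalized switch: under the exponential
state space collapse bound, the `O(ε)` bound on `P(B_ε ≠ ⟨c,s_ε⟩)` and the
alignment property on that event, for every `θ ∈ ℝ`,
`E[(e^{θε⟨c,q_ε⟩} − 1)(e^{θε(B_ε − ⟨c,s_ε⟩)} − 1)]` is `o(ε²)` as `ε → 0⁺`. -/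
theorem stmt14
    (n : ℕ) (hn : 1 ≤ n) (c : Fin n → ℝ)
    (hc_nonneg : ∀ i, 0 ≤ c i) (hc_norm : Real.sqrt (∑ i, c i ^ 2) = 1)
    (Bmax θstar Cstar K ν ε₀ : ℝ)
    (hB : 0 < Bmax) (hθstar : 0 < θstar) (hν : ν ∈ Set.Ioc 0 (Real.pi / 2))
    (hε₀ : 0 < ε₀)
    (Ω : ℝ → Type) [∀ ε, MeasurableSpace (Ω ε)]
    (P : ∀ ε, Measure (Ω ε)) [∀ ε, IsProbabilityMeasure (P ε)]
    (q s : ∀ ε, Ω ε → Fin n → ℝ) (B : ∀ ε, Ω ε → ℝ)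
    (hmq : ∀ ε, Measurable (q ε)) (hms : ∀ ε, Measurable (s ε))
    (hmB : ∀ ε, Measurable (B ε))
    (hq0 : ∀ ε ∈ Set.Ioo 0 ε₀, ∀ᵐ ω ∂(P ε), ∀ i, 0 ≤ q ε ω i)
    (hsB : ∀ ε ∈ Set.Ioo 0 ε₀, ∀ᵐ ω ∂(P ε),
      0 ≤ ∑ i, c i * s ε ω i ∧ (∑ i, c i * s ε ω i) ≤ B ε ω ∧ B ε ω ≤ Bmax)
    (hSSC_int : ∀ ε ∈ Set.Ioo 0 ε₀,
      Integrable (fun ω => Real.exp (θstar *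
        Real.sqrt (∑ i, (q ε ω i - (∑ j, c j * q ε ω j) * c i) ^ 2))) (P ε))
    (hSSC_bdd : ∀ ε ∈ Set.Ioo 0 ε₀,
      (∫ ω, Real.exp (θstar *
        Real.sqrt (∑ i, (q ε ω i - (∑ j, c j * q ε ω j) * c i) ^ 2)) ∂(P ε))
        ≤ Cstar)
    (hprob : ∀ ε ∈ Set.Ioo 0 ε₀,
      ((P ε) {ω | B ε ω ≠ ∑ i, c i * s ε ω i}).toReal ≤ K * ε)
    (halign : ∀ ε ∈ Set.Ioo 0 ε₀, ∀ᵐ ω ∂(P ε),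
      B ε ω ≠ (∑ i, c i * s ε ω i) →
      (∑ i, c i * q ε ω i) ≤ Real.cot ν *
        Real.sqrt (∑ i, (q ε ω i - (∑ j, c j * q ε ω j) * c i) ^ 2)) :
    ∀ θ : ℝ,
      Tendsto (fun ε =>
          (∫ ω, (Real.exp (θ * ε * ∑ i, c i * q ε ω i) - 1)
            * (Real.exp (θ * ε * (B ε ω - ∑ i, c i * s ε ω i)) - 1) ∂(P ε)) / ε ^ 2)
        (𝓝[>] 0) (𝓝 0) := by
  intro θ
  obtain ⟨hν0, hνle⟩ := hν
  have hcot : 0 ≤ Real.cot ν := by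
    rw [Real.cot_eq_cos_div_sin]
    exact div_nonneg (Real.cos_nonneg_of_mem_Icc ⟨by linarith [Real.pi_pos], hνle⟩)
      (le_of_lt (Real.sin_pos_of_pos_of_lt_pi hν0 (by linarith [Real.pi_pos])))
  set T := |θ| with hTdef
  have hT0 : 0 ≤ T := abs_nonneg θ
  have hhalf : ε₀ / 2 ∈ Set.Ioo (0:ℝ) ε₀ := ⟨half_pos hε₀, half_lt_self hε₀⟩
  have hK : 0 ≤ K := by
    have h1 := hprob (ε₀/2) hhalf
    have h2 : (0:ℝ) ≤ ((P (ε₀/2)) {ω | B (ε₀/2) ω ≠ ∑ i, c i * s (ε₀/2) ω i}).toReal :=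
      ENNReal.toReal_nonneg
    have h3 : (0:ℝ) * (ε₀ / 2) ≤ K * (ε₀ / 2) := by
      rw [zero_mul]; exact le_trans h2 h1
    exact le_of_mul_le_mul_right h3 (half_pos hε₀)
  have hCs : 1 ≤ Cstar := by
    have hint := hSSC_int (ε₀/2) hhalf
    have hbd := hSSC_bdd (ε₀/2) hhalf
    have h1 : (1:ℝ) ≤ ∫ ω, Real.exp (θstar *
        Real.sqrt (∑ i, (q (ε₀/2) ω i - (∑ j, c j * q (ε₀/2) ω j) * c i) ^ 2)) ∂(P (ε₀/2)) := by
      have := integral_mono (integrable_const (1:ℝ)) hint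
        (fun ω => Real.one_le_exp (mul_nonneg hθstar.le (Real.sqrt_nonneg _)))
      simpa using this
    linarith only [h1, hbd]
  set C₁ := T * Bmax * Real.exp (T * ε₀ * Bmax) with hC₁def
  have hC₁0 : 0 ≤ C₁ := mul_nonneg (mul_nonneg hT0 hB.le) (Real.exp_pos _).le
  set C₂ := T * Real.cot ν * (4 / θstar) with hC₂def
  have hC₂0 : 0 ≤ C₂ := mul_nonneg (mul_nonneg hT0 hcot) (by positivity)
  set M := C₁ * C₂ * (K + Cstar) with hMdef
  set δ := θstar / (4 * (T * Real.cot ν + 1)) with hδdef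
  have hδ0 : 0 < δ := by
    apply div_pos hθstar
    linarith only [mul_nonneg hT0 hcot]
  set ε₁ := min ε₀ δ with hε₁def
  have hε₁0 : 0 < ε₁ := lt_min hε₀ hδ0
  apply squeeze_zero_norm' (a := fun ε => M * Real.sqrt ε)
  · -- eventual bound
    filter_upwards [Ioo_mem_nhdsGT_of_mem (Set.mem_Ico.mpr ⟨le_refl (0:ℝ), hε₁0⟩)] with ε hε
    obtain ⟨hε0, hεlt⟩ := hε
    have hεε₀ : ε ∈ Set.Ioo 0 ε₀ := ⟨hε0, lt_of_lt_of_le hεlt (min_le_left _ _)⟩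
    have hεδ : ε < δ := lt_of_lt_of_le hεlt (min_le_right _ _)
    have hcotpos : 0 < T * Real.cot ν + 1 := by linarith only [mul_nonneg hT0 hcot]
    have hsmall : T * ε * Real.cot ν ≤ θstar / 4 := by
      have hδval : δ * (4 * (T * Real.cot ν + 1)) = θstar := by
        rw [hδdef]; field_simp
      have hmul : ε * (T * Real.cot ν + 1) ≤ δ * (T * Real.cot ν + 1) :=
        mul_le_mul_of_nonneg_right hεδ.le hcotpos.le
      nlinarith only [hmul, hδval, hε0.le]
    have hs0 : 0 < Real.sqrt ε := Real.sqrt_pos.mpr hε0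
    have hss : Real.sqrt ε * Real.sqrt ε = ε := Real.mul_self_sqrt hε0.le
    set a := C₁ * C₂ * ε ^ 2 * (Real.sqrt ε)⁻¹ with hadef
    set b := C₁ * C₂ * ε ^ 2 * Real.sqrt ε with hbdef
    have ha0 : 0 ≤ a := by positivity
    have hb0 : 0 ≤ b := by positivity
    -- measurability
    have hXm : Measurable fun ω => ∑ i, c i * q ε ω i :=
      Finset.measurable_sum _ fun i _ => ((measurable_pi_apply i).comp (hmq ε)).const_mul (c i)
    have hSm : Measurable fun ω => ∑ i, c i * s ε ω i :=
      Finset.measurable_sum _ fun i _ => ((measurable_pi_apply i).comp (hms ε)).const_mul (c i)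
    have hZm : Measurable fun ω =>
        Real.sqrt (∑ i, (q ε ω i - (∑ j, c j * q ε ω j) * c i) ^ 2) :=
      Real.continuous_sqrt.measurable.comp (Finset.measurable_sum _ fun i _ =>
        (((measurable_pi_apply i).comp (hmq ε)).sub (hXm.mul_const (c i))).pow_const 2)
    have hAmeas : MeasurableSet {ω | B ε ω ≠ ∑ i, c i * s ε ω i} := by
      have := (measurableSet_eq_fun (hmB ε) hSm).compl
      simpa [Set.compl_setOf] using this
    have hfm : Measurable fun ω => (Real.exp (θ * ε * ∑ i, c i * q ε ω i) - 1)
        * (Real.exp (θ * ε * (B ε ω - ∑ i, c i * s ε ω i)) - 1) :=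
      ((Real.measurable_exp.comp (hXm.const_mul (θ * ε))).sub measurable_const).mul
        ((Real.measurable_exp.comp (((hmB ε).sub hSm).const_mul (θ * ε))).sub measurable_const)
    -- the dominating function
    have hgint1 : Integrable (fun ω =>
        a * Set.indicator {ω | B ε ω ≠ ∑ i, c i * s ε ω i} (fun _ => (1:ℝ)) ω) (P ε) :=
      ((integrable_const (1:ℝ)).indicator hAmeas).const_mul a
    have hgint2 : Integrable (fun ω => b * Real.exp (θstar *
        Real.sqrt (∑ i, (q ε ω i - (∑ j, c j * q ε ω j) * c i) ^ 2))) (P ε) :=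
      (hSSC_int ε hεε₀).const_mul b
    have hgint : Integrable (fun ω =>
        a * Set.indicator {ω | B ε ω ≠ ∑ i, c i * s ε ω i} (fun _ => (1:ℝ)) ω
        + b * Real.exp (θstar *
          Real.sqrt (∑ i, (q ε ω i - (∑ j, c j * q ε ω j) * c i) ^ 2))) (P ε) :=
      hgint1.add hgint2
    -- pointwise a.e. bound
    have hae : ∀ᵐ ω ∂(P ε),
        ‖(Real.exp (θ * ε * ∑ i, c i * q ε ω i) - 1)
          * (Real.exp (θ * ε * (B ε ω - ∑ i, c i * s ε ω i)) - 1)‖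
        ≤ a * Set.indicator {ω | B ε ω ≠ ∑ i, c i * s ε ω i} (fun _ => (1:ℝ)) ω
          + b * Real.exp (θstar *
            Real.sqrt (∑ i, (q ε ω i - (∑ j, c j * q ε ω j) * c i) ^ 2)) := by
      filter_upwards [hq0 ε hεε₀, hsB ε hεε₀, halign ε hεε₀] with ω hq' hYs hal
      obtain ⟨hcs0, hcsB, hBle⟩ := hYs
      have hX0 : 0 ≤ ∑ i, c i * q ε ω i :=
        Finset.sum_nonneg fun i _ => mul_nonneg (hc_nonneg i) (hq' i)
      have hY0 : 0 ≤ B ε ω - ∑ i, c i * s ε ω i := by linarith only [hcsB]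
      have hYB : B ε ω - ∑ i, c i * s ε ω i ≤ Bmax := by linarith only [hcs0, hBle]
      have hZ0 : 0 ≤ Real.sqrt (∑ i, (q ε ω i - (∑ j, c j * q ε ω j) * c i) ^ 2) :=
        Real.sqrt_nonneg _
      by_cases hA : B ε ω = ∑ i, c i * s ε ω i
      · have h0 : B ε ω - ∑ i, c i * s ε ω i = 0 := by rw [hA]; ring
        rw [h0]
        simp only [mul_zero, Real.exp_zero, sub_self, norm_zero]
        have hind : (0:ℝ) ≤ Set.indicator {ω | B ε ω ≠ ∑ i, c i * s ε ω i}
            (fun _ => (1:ℝ)) ω := Set.indicator_nonneg (fun _ _ => zero_le_one) ω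
        have := (Real.exp_pos (θstar *
          Real.sqrt (∑ i, (q ε ω i - (∑ j, c j * q ε ω j) * c i) ^ 2))).le
        exact add_nonneg (mul_nonneg ha0 hind) (mul_nonneg hb0 this)
      · have hXZ := hal hA
        have hind : Set.indicator {ω | B ε ω ≠ ∑ i, c i * s ε ω i}
            (fun _ => (1:ℝ)) ω = 1 :=
          Set.indicator_of_mem (show ω ∈ {ω | B ε ω ≠ ∑ i, c i * s ε ω i} from hA) _
        set Z := Real.sqrt (∑ i, (q ε ω i - (∑ j, c j * q ε ω j) * c i) ^ 2) with hZdef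
        set X := ∑ i, c i * q ε ω i with hXdef
        set Y := B ε ω - ∑ i, c i * s ε ω i with hYdef
        have hEmul : Real.exp (θstar/2 * Z) * Real.exp (θstar/2 * Z)
            = Real.exp (θstar * Z) := by rw [← Real.exp_add]; ring_nf
        -- bound on second factor
        have hb2 : |Real.exp (θ * ε * Y) - 1| ≤ C₁ * ε := by
          have e1 : |θ * ε * Y| = T * ε * Y := by
            rw [abs_mul, abs_mul, abs_of_pos hε0, abs_of_nonneg hY0, hTdef]
          calc |Real.exp (θ * ε * Y) - 1| ≤ Real.exp |θ * ε * Y| - 1 :=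
                aux_abs_exp_sub_one_le _
            _ = Real.exp (T * ε * Y) - 1 := by rw [e1]
            _ ≤ (T * ε * Y) * Real.exp (T * ε * Y) := aux_exp_sub_one_le _
            _ ≤ (T * ε * Bmax) * Real.exp (T * ε₀ * Bmax) := by
                have h1 : T * ε * Y ≤ T * ε * Bmax :=
                  mul_le_mul_of_nonneg_left hYB (mul_nonneg hT0 hε0.le)
                have h2 : T * ε * Y ≤ T * ε₀ * Bmax :=
                  le_trans h1 (mul_le_mul_of_nonneg_right
                    (mul_le_mul_of_nonneg_left hεε₀.2.le hT0) hB.le)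
                exact mul_le_mul h1 (Real.exp_le_exp.mpr h2) (Real.exp_pos _).le
                  (mul_nonneg (mul_nonneg hT0 hε0.le) hB.le)
            _ = C₁ * ε := by rw [hC₁def]; ring
        -- bound on first factor
        have hb1 : |Real.exp (θ * ε * X) - 1|
            ≤ C₂ * ε * ((Real.sqrt ε)⁻¹ + Real.sqrt ε * Real.exp (θstar * Z)) := by
          have e1 : |θ * ε * X| = T * ε * X := by
            rw [abs_mul, abs_mul, abs_of_pos hε0, abs_of_nonneg hX0, hTdef]
          have hXc1 : T * ε * X ≤ (T * ε * Real.cot ν) * Z := by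
            calc T * ε * X ≤ T * ε * (Real.cot ν * Z) :=
                  mul_le_mul_of_nonneg_left hXZ (mul_nonneg hT0 hε0.le)
              _ = (T * ε * Real.cot ν) * Z := by ring
          have hXc2 : T * ε * X ≤ θstar/4 * Z := by
            calc T * ε * X ≤ (T * ε * Real.cot ν) * Z := hXc1
              _ ≤ θstar/4 * Z := mul_le_mul_of_nonneg_right hsmall hZ0
          have hZle : Z ≤ 4 / θstar * Real.exp (θstar/4 * Z) := by
            have h := aux_le_exp (θstar/4 * Z)
            rw [div_mul_eq_mul_div, le_div_iff₀ hθstar]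
            linarith only [h]
          have step1 : (T * ε * X) * Real.exp (T * ε * X)
              ≤ ((T * ε * Real.cot ν) * Z) * Real.exp (θstar/4 * Z) := by
            apply mul_le_mul hXc1 (Real.exp_le_exp.mpr hXc2) (Real.exp_pos _).le
            exact mul_nonneg (mul_nonneg (mul_nonneg hT0 hε0.le) hcot) hZ0
          have step2 : ((T * ε * Real.cot ν) * Z) * Real.exp (θstar/4 * Z)
              ≤ (T * ε * Real.cot ν) * (4 / θstar * Real.exp (θstar/4 * Z))
                * Real.exp (θstar/4 * Z) := by
            have h := mul_le_mul_of_nonneg_left hZle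
              (mul_nonneg (mul_nonneg hT0 hε0.le) hcot)
            exact mul_le_mul_of_nonneg_right h (Real.exp_pos _).le
          have step3 : (T * ε * Real.cot ν) * (4 / θstar * Real.exp (θstar/4 * Z))
              * Real.exp (θstar/4 * Z) = C₂ * ε * Real.exp (θstar/2 * Z) := by
            have hEmul2 : Real.exp (θstar/4 * Z) * Real.exp (θstar/4 * Z)
                = Real.exp (θstar/2 * Z) := by rw [← Real.exp_add]; ring_nf
            rw [hC₂def]
            calc (T * ε * Real.cot ν) * (4 / θstar * Real.exp (θstar/4 * Z))
                * Real.exp (θstar/4 * Z)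
                = (T * Real.cot ν * (4/θstar)) * ε
                  * (Real.exp (θstar/4 * Z) * Real.exp (θstar/4 * Z)) := by ring
              _ = T * Real.cot ν * (4/θstar) * ε * Real.exp (θstar/2 * Z) := by
                  rw [hEmul2]
          have hEsplit : Real.exp (θstar/2 * Z)
              ≤ (Real.sqrt ε)⁻¹ + Real.sqrt ε * Real.exp (θstar * Z) := by
            have := aux_split (Real.sqrt ε) (Real.exp (θstar/2 * Z)) hs0 (Real.exp_pos _)
            rwa [hEmul] at this
          calc |Real.exp (θ * ε * X) - 1| ≤ Real.exp |θ * ε * X| - 1 :=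
                aux_abs_exp_sub_one_le _
            _ = Real.exp (T * ε * X) - 1 := by rw [e1]
            _ ≤ (T * ε * X) * Real.exp (T * ε * X) := aux_exp_sub_one_le _
            _ ≤ C₂ * ε * Real.exp (θstar/2 * Z) := by
                rw [← step3]; exact le_trans step1 step2
            _ ≤ C₂ * ε * ((Real.sqrt ε)⁻¹ + Real.sqrt ε * Real.exp (θstar * Z)) :=
                mul_le_mul_of_nonneg_left hEsplit (by positivity)
        have hrhs0 : 0 ≤ C₂ * ε * ((Real.sqrt ε)⁻¹ + Real.sqrt ε * Real.exp (θstar * Z)) := by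
          positivity
        calc ‖(Real.exp (θ * ε * X) - 1) * (Real.exp (θ * ε * Y) - 1)‖
            = |Real.exp (θ * ε * X) - 1| * |Real.exp (θ * ε * Y) - 1| := by
              rw [Real.norm_eq_abs, abs_mul]
          _ ≤ (C₂ * ε * ((Real.sqrt ε)⁻¹ + Real.sqrt ε * Real.exp (θstar * Z)))
              * (C₁ * ε) := mul_le_mul hb1 hb2 (abs_nonneg _) hrhs0
          _ = a * 1 + b * Real.exp (θstar * Z) := by
              rw [hadef, hbdef]; field_simp
          _ = a * Set.indicator {ω | B ε ω ≠ ∑ i, c i * s ε ω i}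
                (fun _ => (1:ℝ)) ω + b * Real.exp (θstar * Z) := by rw [hind]
    -- integral bound
    have hIle : ‖∫ ω, (Real.exp (θ * ε * ∑ i, c i * q ε ω i) - 1)
        * (Real.exp (θ * ε * (B ε ω - ∑ i, c i * s ε ω i)) - 1) ∂(P ε)‖
        ≤ ∫ ω, (a * Set.indicator {ω | B ε ω ≠ ∑ i, c i * s ε ω i} (fun _ => (1:ℝ)) ω
          + b * Real.exp (θstar *
            Real.sqrt (∑ i, (q ε ω i - (∑ j, c j * q ε ω j) * c i) ^ 2))) ∂(P ε) :=
      norm_integral_le_of_norm_le hgint hae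
    have hgval : ∫ ω, (a * Set.indicator {ω | B ε ω ≠ ∑ i, c i * s ε ω i}
          (fun _ => (1:ℝ)) ω
        + b * Real.exp (θstar *
          Real.sqrt (∑ i, (q ε ω i - (∑ j, c j * q ε ω j) * c i) ^ 2))) ∂(P ε)
        = a * ((P ε) {ω | B ε ω ≠ ∑ i, c i * s ε ω i}).toReal
          + b * ∫ ω, Real.exp (θstar *
            Real.sqrt (∑ i, (q ε ω i - (∑ j, c j * q ε ω j) * c i) ^ 2)) ∂(P ε) := by
      rw [integral_add hgint1 hgint2, integral_const_mul, integral_const_mul,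
        integral_indicator_const (1:ℝ) hAmeas]
      simp [smul_eq_mul]
      exact Or.inl rfl
    have hgle : a * ((P ε) {ω | B ε ω ≠ ∑ i, c i * s ε ω i}).toReal
          + b * ∫ ω, Real.exp (θstar *
            Real.sqrt (∑ i, (q ε ω i - (∑ j, c j * q ε ω j) * c i) ^ 2)) ∂(P ε)
        ≤ M * ε ^ 2 * Real.sqrt ε := by
      have h1 := hprob ε hεε₀
      have h2 := hSSC_bdd ε hεε₀
      have key : (Real.sqrt ε)⁻¹ * ε = Real.sqrt ε := by
        rw [← hss]; field_simp
        rw [Real.sqrt_sq hs0.le]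
      have step : a * ((P ε) {ω | B ε ω ≠ ∑ i, c i * s ε ω i}).toReal
          + b * ∫ ω, Real.exp (θstar *
            Real.sqrt (∑ i, (q ε ω i - (∑ j, c j * q ε ω j) * c i) ^ 2)) ∂(P ε)
          ≤ a * (K * ε) + b * Cstar :=
        add_le_add (mul_le_mul_of_nonneg_left h1 ha0) (mul_le_mul_of_nonneg_left h2 hb0)
      have eqn : a * (K * ε) + b * Cstar = M * ε ^ 2 * Real.sqrt ε := by
        rw [hadef, hbdef, hMdef]
        linear_combination (C₁ * C₂ * ε ^ 2 * K) * key
      linarith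
    -- conclude
    have hε2 : (0:ℝ) < ε ^ 2 := by positivity
    rw [norm_div, Real.norm_eq_abs (ε ^ 2), abs_of_pos hε2]
    calc ‖∫ ω, (Real.exp (θ * ε * ∑ i, c i * q ε ω i) - 1)
          * (Real.exp (θ * ε * (B ε ω - ∑ i, c i * s ε ω i)) - 1) ∂(P ε)‖ / ε ^ 2
        ≤ (M * ε ^ 2 * Real.sqrt ε) / ε ^ 2 := by
          apply (div_le_div_iff_of_pos_right hε2).mpr
          rw [hgval] at hIle
          linarith only [hgle, hIle]
      _ = M * Real.sqrt ε := by field_simp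
  · have h1 : Tendsto (fun ε : ℝ => Real.sqrt ε) (𝓝[>] (0:ℝ)) (𝓝 0) := by
      have h0 : Tendsto (fun x : ℝ => Real.sqrt x) (𝓝 (0:ℝ)) (𝓝 (Real.sqrt 0)) :=
        Real.continuous_sqrt.tendsto 0
      simpa using h0.mono_left (nhdsWithin_le_nhds (s := Set.Ioi (0:ℝ)))
    have := h1.const_mul M
    simpa using this
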